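/- Let n = 2m², and let S be the equi-n-square obtained by partitioning [n]×[n] into m×m boxes A_{i,j} (i,j ∈ [2m]), pairing A_{2k−1,2k−1} with A_{2k,2k} for k ∈ [m] and A_{i,j} with A_{j,i} for i < j, and giving each pair a unique colour. For k ∈ [2m], let C_k be the union of all boxes in the k-th box-row and k-th box-column. Then for every transversal T of S and every k ∈ [m], at least one colour appearing in C_{2k−1} ∪ C_{2k} is not used by T. -/
import Mathlib


/-- The box of side length `m` containing a cell (0-indexed). -/
def boxOf (m : ℕ) (p : ℕ × ℕ) : ℕ × ℕ := (p.1 / m, p.2 / m)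

/-- Two boxes (0-indexed) are paired: diagonal boxes `A_{2k,2k}` and `A_{2k+1,2k+1}`,
and off-diagonal boxes `A_{i,j}` and `A_{j,i}` (`i ≠ j`). -/
def boxPaired (b b' : ℕ × ℕ) : Prop :=
  (b.1 = b.2 ∧ b'.1 = b'.2 ∧ b.1 / 2 = b'.1 / 2) ∨
  (b.1 ≠ b.2 ∧ (b' = b ∨ b' = (b.2, b.1)))

/-- A transversal: a set of cells sharing no row, column or symbol. -/
def IsTransversal {n : ℕ} (S : Fin n × Fin n → Fin n) (T : Finset (Fin n × Fin n)) : Prop :=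
  ∀ p ∈ T, ∀ q ∈ T, p ≠ q → p.1 ≠ q.1 ∧ p.2 ≠ q.2 ∧ S p ≠ S q

/-- Membership of a cell in `C_k` (0-indexed): the union of the boxes in the `k`-th
box-row and the `k`-th box-column. -/
def inC (m k : ℕ) (p : ℕ × ℕ) : Prop := p.1 / m = k ∨ p.2 / m = k

/-- In the paired-boxes equi-`n`-square with `n = 2m²`, for every transversal `T` and
every `k ∈ [m]` (0-indexed), at least one colour appearing in `C_{2k} ∪ C_{2k+1}` is
not used by `T`. -/
theorem stmt2 (m : ℕ) (hm : 1 ≤ m)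
    (S : Fin (2 * m ^ 2) × Fin (2 * m ^ 2) → Fin (2 * m ^ 2))
    (hS : ∀ p q : Fin (2 * m ^ 2) × Fin (2 * m ^ 2),
      S p = S q ↔ boxPaired (boxOf m ((p.1 : ℕ), (p.2 : ℕ))) (boxOf m ((q.1 : ℕ), (q.2 : ℕ))))
    (hequi : ∀ c : Fin (2 * m ^ 2),
      (Finset.univ.filter (fun p : Fin (2 * m ^ 2) × Fin (2 * m ^ 2) => S p = c)).card
        = 2 * m ^ 2)
    (T : Finset (Fin (2 * m ^ 2) × Fin (2 * m ^ 2))) (hT : IsTransversal S T)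
    (k : ℕ) (hk : k < m) :
    ∃ c : Fin (2 * m ^ 2),
      (∃ p : Fin (2 * m ^ 2) × Fin (2 * m ^ 2),
        (inC m (2 * k) ((p.1 : ℕ), (p.2 : ℕ)) ∨ inC m (2 * k + 1) ((p.1 : ℕ), (p.2 : ℕ))) ∧
        S p = c) ∧
      ∀ p ∈ T, S p ≠ c := by
  by_contra hcon
  push_neg at hcon
  have hm0 : 0 < m := hm
  have hn0 : 0 < 2 * m ^ 2 := by positivity
  have hlt : ∀ a : ℕ, a < 2 * m → a * m < 2 * m ^ 2 := by
    intro a ha; nlinarith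
  set rep : ℕ → ℕ → Fin (2*m^2) × Fin (2*m^2) := fun a b =>
    (⟨a * m % (2*m^2), Nat.mod_lt _ hn0⟩, ⟨b * m % (2*m^2), Nat.mod_lt _ hn0⟩) with hrepdef
  have hrv : ∀ a b : ℕ, a < 2*m → b < 2*m →
      ((rep a b).1 : ℕ) = a * m ∧ ((rep a b).2 : ℕ) = b * m := by
    intro a b ha hb
    constructor <;>
      simp [hrepdef, Nat.mod_eq_of_lt (hlt _ ha), Nat.mod_eq_of_lt (hlt _ hb)]
  have hdiv : ∀ a : ℕ, a * m / m = a := fun a => Nat.mul_div_cancel a hm0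
  have colEq : ∀ (p : Fin (2*m^2) × Fin (2*m^2)) (a b : ℕ), a < 2*m → b < 2*m →
      (S p = S (rep a b) ↔ boxPaired ((p.1:ℕ)/m, (p.2:ℕ)/m) (a, b)) := by
    intro p a b ha hb
    rw [hS]
    obtain ⟨h1, h2⟩ := hrv a b ha hb
    simp [boxOf, h1, h2, Nat.mod_eq_of_lt (hlt _ ha), Nat.mod_eq_of_lt (hlt _ hb), hdiv]
  have repEq : ∀ a b a' b' : ℕ, a < 2*m → b < 2*m → a' < 2*m → b' < 2*m →
      (S (rep a b) = S (rep a' b') ↔ boxPaired (a, b) (a', b')) := by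
    intro a b a' b' ha hb ha' hb'
    rw [colEq (rep a b) a' b' ha' hb']
    obtain ⟨h1, h2⟩ := hrv a b ha hb
    rw [h1, h2, hdiv, hdiv]
  have key : ∀ a b : ℕ, a < 2*m → b < 2*m →
      (a = 2*k ∨ a = 2*k+1 ∨ b = 2*k ∨ b = 2*k+1) →
      ∃ p, p ∈ T ∧ S p = S (rep a b) := by
    intro a b ha hb hr
    refine hcon (S (rep a b)) ⟨rep a b, ?_, rfl⟩
    obtain ⟨h1, h2⟩ := hrv a b ha hb
    simp only [inC, h1, h2, Nat.mod_eq_of_lt (hlt _ ha), Nat.mod_eq_of_lt (hlt _ hb), hdiv]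
    omega
  have h2k : 2*k < 2*m := by omega
  have h2k1 : 2*k+1 < 2*m := by omega
  obtain ⟨pD, hpDT, hpDS⟩ := key (2*k) (2*k) h2k h2k (by omega)
  have hpDbox := (colEq pD (2*k) (2*k) h2k h2k).mp hpDS
  obtain ⟨hDrc, hDd⟩ : (pD.1:ℕ)/m = (pD.2:ℕ)/m ∧
      ((pD.1:ℕ)/m = 2*k ∨ (pD.1:ℕ)/m = 2*k+1) := by
    simp only [boxPaired, Prod.mk.injEq, ne_eq] at hpDbox
    omega
  set d := (pD.1:ℕ)/m with hd
  have hdm : d < 2*m := by omega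
  obtain ⟨pX, hpXT, hpXS⟩ := key (2*k) (2*k+1) h2k h2k1 (by omega)
  have hpXbox := (colEq pX (2*k) (2*k+1) h2k h2k1).mp hpXS
  have hX : (pX.1:ℕ)/m = d ∨ (pX.2:ℕ)/m = d := by
    simp only [boxPaired, Prod.mk.injEq, ne_eq] at hpXbox
    omega
  set J : Finset ℕ := (Finset.range (2*m)).filter (fun j => j ≠ 2*k ∧ j ≠ 2*k+1) with hJdef
  have hJ : ∀ j, j ∈ J ↔ (j < 2*m ∧ j ≠ 2*k ∧ j ≠ 2*k+1) := by
    intro j; simp [hJdef, and_comm]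
  have hJcard : J.card = 2*m - 2 := by
    have hJeq : J = Finset.range (2*m) \ {2*k, 2*k+1} := by
      ext j
      simp only [hJdef, Finset.mem_filter, Finset.mem_range, Finset.mem_sdiff,
        Finset.mem_insert, Finset.mem_singleton]
      omega
    rw [hJeq, Finset.card_sdiff_of_subset]
    · rw [Finset.card_range]
      rw [Finset.card_insert_of_notMem (by simp), Finset.card_singleton]
    · intro x hx
      simp only [Finset.mem_insert, Finset.mem_singleton] at hx
      simp only [Finset.mem_range]
      omega
  have hfex : ∀ j : ℕ, ∃ p, j ∈ J → (p ∈ T ∧ S p = S (rep d j)) := by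
    intro j
    by_cases hj : j ∈ J
    · obtain ⟨p, hp⟩ := key d j hdm ((hJ j).mp hj).1 (by omega)
      exact ⟨p, fun _ => hp⟩
    · exact ⟨pD, fun h => absurd h hj⟩
  choose f hf using hfex
  have hfbox : ∀ j ∈ J, (((f j).1:ℕ)/m = d ∨ ((f j).2:ℕ)/m = d) := by
    intro j hj
    have hb := (colEq (f j) d j hdm ((hJ j).mp hj).1).mp (hf j hj).2
    have hjp := (hJ j).mp hj
    simp only [boxPaired, Prod.mk.injEq, ne_eq] at hb
    omega
  have hinj : Set.InjOn f ↑J := by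
    intro j hj j' hj' hEq
    have hj1 := Finset.mem_coe.mp hj
    have hj2 := Finset.mem_coe.mp hj'
    have h1 := (hf j hj1).2
    have h2 := (hf j' hj2).2
    rw [hEq, h2] at h1
    have hbp := (repEq d j' d j hdm ((hJ j').mp hj2).1 hdm ((hJ j).mp hj1).1).mp h1
    have hjp1 := (hJ j).mp hj1
    have hjp2 := (hJ j').mp hj2
    simp only [boxPaired, Prod.mk.injEq, ne_eq] at hbp
    omega
  have hXimage : pX ∉ J.image f := by
    intro hmem
    obtain ⟨j, hj, hje⟩ := Finset.mem_image.mp hmem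
    have h1 := (hf j hj).2
    rw [hje] at h1
    have h2 := hpXS.symm.trans h1
    have hbp := (repEq (2*k) (2*k+1) d j h2k h2k1 hdm ((hJ j).mp hj).1).mp h2
    have hjp := (hJ j).mp hj
    simp only [boxPaired, Prod.mk.injEq, ne_eq] at hbp
    omega
  have hDins : pD ∉ insert pX (J.image f) := by
    intro hmem
    rcases Finset.mem_insert.mp hmem with h | h
    · have h2 := hpDS.symm.trans (h ▸ hpXS)
      have hbp := (repEq (2*k) (2*k) (2*k) (2*k+1) h2k h2k h2k h2k1).mp h2
      simp only [boxPaired, Prod.mk.injEq, ne_eq] at hbp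
      omega
    · obtain ⟨j, hj, hje⟩ := Finset.mem_image.mp h
      have h1 := (hf j hj).2
      rw [hje] at h1
      have h2 := hpDS.symm.trans h1
      have hbp := (repEq (2*k) (2*k) d j h2k h2k hdm ((hJ j).mp hj).1).mp h2
      have hjp := (hJ j).mp hj
      simp only [boxPaired, Prod.mk.injEq, ne_eq] at hbp
      omega
  set E : Finset (Fin (2*m^2) × Fin (2*m^2)) := insert pD (insert pX (J.image f)) with hEdef
  have hEcard : E.card = 2*m := by
    rw [hEdef, Finset.card_insert_of_notMem hDins, Finset.card_insert_of_notMem hXimage,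
      Finset.card_image_of_injOn hinj, hJcard]
    omega
  set Row : Finset (Fin (2*m^2) × Fin (2*m^2)) := T.filter (fun p => (p.1:ℕ)/m = d) with hRdef
  set Col : Finset (Fin (2*m^2) × Fin (2*m^2)) := T.filter (fun p => (p.2:ℕ)/m = d) with hCdef
  have hDRow : pD ∈ Row := Finset.mem_filter.mpr ⟨hpDT, rfl⟩
  have hDCol : pD ∈ Col := Finset.mem_filter.mpr ⟨hpDT, hDrc.symm⟩
  have hsub : E ⊆ Row ∪ Col := by
    intro p hp
    rw [hEdef] at hp
    rcases Finset.mem_insert.mp hp with rfl | hp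
    · exact Finset.mem_union_left _ hDRow
    rcases Finset.mem_insert.mp hp with rfl | hp
    · rcases hX with h | h
      · exact Finset.mem_union_left _ (Finset.mem_filter.mpr ⟨hpXT, h⟩)
      · exact Finset.mem_union_right _ (Finset.mem_filter.mpr ⟨hpXT, h⟩)
    · obtain ⟨j, hj, rfl⟩ := Finset.mem_image.mp hp
      rcases hfbox j hj with h | h
      · exact Finset.mem_union_left _ (Finset.mem_filter.mpr ⟨(hf j hj).1, h⟩)
      · exact Finset.mem_union_right _ (Finset.mem_filter.mpr ⟨(hf j hj).1, h⟩)
  have hRowle : Row.card ≤ m := by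
    have := Finset.card_le_card_of_injOn (fun p => (p.1:ℕ) % m)
      (fun p _ => Finset.mem_range.mpr (Nat.mod_lt _ hm0)) (s := Row) ?_
    · simpa using this
    · intro p hp q hq hpq
      have hp' := Finset.mem_filter.mp (Finset.mem_coe.mp hp)
      have hq' := Finset.mem_filter.mp (Finset.mem_coe.mp hq)
      simp only at hpq
      have h1 : (p.1 : ℕ) = (q.1 : ℕ) := by
        calc (p.1:ℕ) = m * ((p.1:ℕ)/m) + (p.1:ℕ)%m := (Nat.div_add_mod _ _).symm
          _ = m * ((q.1:ℕ)/m) + (q.1:ℕ)%m := by rw [hp'.2, hq'.2, hpq]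
          _ = (q.1:ℕ) := Nat.div_add_mod _ _
      by_contra hne
      exact (hT p hp'.1 q hq'.1 hne).1 (Fin.ext h1)
  have hColle : Col.card ≤ m := by
    have := Finset.card_le_card_of_injOn (fun p => (p.2:ℕ) % m)
      (fun p _ => Finset.mem_range.mpr (Nat.mod_lt _ hm0)) (s := Col) ?_
    · simpa using this
    · intro p hp q hq hpq
      have hp' := Finset.mem_filter.mp (Finset.mem_coe.mp hp)
      have hq' := Finset.mem_filter.mp (Finset.mem_coe.mp hq)
      simp only at hpq
      have h1 : (p.2 : ℕ) = (q.2 : ℕ) := by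
        calc (p.2:ℕ) = m * ((p.2:ℕ)/m) + (p.2:ℕ)%m := (Nat.div_add_mod _ _).symm
          _ = m * ((q.2:ℕ)/m) + (q.2:ℕ)%m := by rw [hp'.2, hq'.2, hpq]
          _ = (q.2:ℕ) := Nat.div_add_mod _ _
      by_contra hne
      exact (hT p hp'.1 q hq'.1 hne).2.1 (Fin.ext h1)
  have h1 : E.card ≤ (Row ∪ Col).card := Finset.card_le_card hsub
  have h2 := Finset.card_union_add_card_inter Row Col
  have h3 : 1 ≤ (Row ∩ Col).card :=
    Finset.card_pos.mpr ⟨pD, Finset.mem_inter.mpr ⟨hDRow, hDCol⟩⟩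
  omega
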